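/- Let X* ∈ Sym(n,ℝ) be PSD with AX* = 0 for full row rank A, written as X* = UᵀΘ*U with Θ* PSD as in the facial parametrization. Then the normal cone to the face F ∩ S₊ⁿ = {X ⪰ 0 : AX = 0} at X* equals { S ∈ Sym(n,ℝ) : −USUᵀ ⪰ 0 and USX* = 0 }. -/

import Mathlib

open Matrix

section Aux

variable {k l : Type*} [Fintype k] [Fintype l] [DecidableEq k]

lemma aux_trace_nonneg {M : Matrix k k ℝ} (hM : M.PosSemidef) : 0 ≤ M.trace := by
  refine Finset.sum_nonneg fun i _ => ?_
  have := hM.dotProduct_mulVec_nonneg (Pi.single i 1)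
  simpa [mulVec, dotProduct, Pi.single_apply] using this

open scoped MatrixOrder in
lemma aux_trace_mul_nonneg {M N : Matrix k k ℝ} (hM : M.PosSemidef) (hN : N.PosSemidef) :
    0 ≤ (M * N).trace := by
  have h1 : M * N = M * (CFC.sqrt N * CFC.sqrt N) := by rw [CFC.sqrt_mul_sqrt_self N hN.nonneg]
  have h2 : (M * N).trace = (CFC.sqrt N * M * CFC.sqrt N).trace := by
    rw [h1, ← mul_assoc, trace_mul_comm, mul_assoc]
  rw [h2]
  refine aux_trace_nonneg ?_
  have := hM.mul_mul_conjTranspose_same (CFC.sqrt N)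
  rwa [(CFC.sqrt_nonneg N).posSemidef.isHermitian.eq] at this

omit [DecidableEq k] in
lemma aux_trace_transpose_mul_self_eq_zero {M : Matrix k l ℝ} (h : (Mᵀ * M).trace = 0) :
    M = 0 := by
  have key : ∀ j, ∀ i, M i j = 0 := by
    have hsum : ∑ j, ∑ i, M i j * M i j = 0 := by
      simpa [trace, Matrix.mul_apply, Matrix.diag] using h
    intro j i
    have h1 : ∀ j ∈ Finset.univ, (0:ℝ) ≤ ∑ i, M i j * M i j :=
      fun j _ => Finset.sum_nonneg fun i _ => mul_self_nonneg _
    have h2 := (Finset.sum_eq_zero_iff_of_nonneg h1).mp hsum j (Finset.mem_univ j)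
    have h3 : ∀ i ∈ Finset.univ, (0:ℝ) ≤ M i j * M i j := fun i _ => mul_self_nonneg _
    have := (Finset.sum_eq_zero_iff_of_nonneg h3).mp h2 i (Finset.mem_univ i)
    exact mul_self_eq_zero.mp this
  ext i j; exact key j i

open scoped MatrixOrder in
lemma aux_trace_mul_eq_zero {M N : Matrix k k ℝ} (hM : M.PosSemidef) (hN : N.PosSemidef)
    (h : (M * N).trace = 0) : M * N = 0 := by
  set P := CFC.sqrt M with hP
  set Q := CFC.sqrt N with hQ
  have hPP : P * P = M := CFC.sqrt_mul_sqrt_self M hM.nonneg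
  have hQQ : Q * Q = N := CFC.sqrt_mul_sqrt_self N hN.nonneg
  have hPs : Pᵀ = P := by
    have := (CFC.sqrt_nonneg M).posSemidef.isHermitian.eq
    simpa [conjTranspose_eq_transpose_of_trivial] using this
  have hQs : Qᵀ = Q := by
    have := (CFC.sqrt_nonneg N).posSemidef.isHermitian.eq
    simpa [conjTranspose_eq_transpose_of_trivial] using this
  have hB : ((Q * P)ᵀ * (Q * P)).trace = 0 := by
    have : (Q * P)ᵀ * (Q * P) = P * N * P := by
      rw [transpose_mul, hPs, hQs, ← hQQ]; simp only [Matrix.mul_assoc]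
    rw [this]
    calc (P * N * P).trace = (P * (N * P)).trace := by rw [mul_assoc]
      _ = ((N * P) * P).trace := by rw [trace_mul_comm]
      _ = (M * N).trace := by rw [mul_assoc, hPP, trace_mul_comm]
      _ = 0 := h
  have hQP : Q * P = 0 := aux_trace_transpose_mul_self_eq_zero hB
  calc M * N = P * (Q * P)ᵀ * Q := by
        rw [transpose_mul, hPs, hQs, ← hPP, ← hQQ]; simp only [Matrix.mul_assoc]
    _ = 0 := by rw [hQP, transpose_zero, mul_zero, zero_mul]

end Aux

lemma aux_vecMulVec_psd {q : ℕ} (w : Fin q → ℝ) : (vecMulVec w w).PosSemidef := by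
  refine PosSemidef.of_dotProduct_mulVec_nonneg ?_ ?_
  · ext i j
    simp [vecMulVec_apply, conjTranspose_apply, mul_comm]
  · intro x
    have : dotProduct (star x) (vecMulVec w w *ᵥ x) = (dotProduct w x) * (dotProduct w x) := by
      simp only [star_trivial, dotProduct, mulVec, vecMulVec_apply, Finset.mul_sum,
        Finset.sum_mul]
      rw [Finset.sum_comm]
      congr 1; ext i; congr 1; ext j; ring
    rw [this]; exact mul_self_nonneg _

lemma aux_psd_add {q : ℕ} {M N : Matrix (Fin q) (Fin q) ℝ} (hM : M.PosSemidef)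
    (hN : N.PosSemidef) : (M + N).PosSemidef := by
  refine PosSemidef.of_dotProduct_mulVec_nonneg (hM.1.add hN.1) fun x => ?_
  rw [add_mulVec, dotProduct_add]
  exact add_nonneg (hM.dotProduct_mulVec_nonneg x) (hN.dotProduct_mulVec_nonneg x)

lemma aux_cancel {q n : ℕ} (U : Matrix (Fin q) (Fin n) ℝ) (hU : U.rank = q)
    {p : ℕ} (N : Matrix (Fin p) (Fin q) ℝ) (hN : N * U = 0) : N = 0 := by
  have hli : LinearIndependent ℝ U.row := by
    rw [linearIndependent_iff_card_eq_finrank_span]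
    rw [Set.finrank, ← rank_eq_finrank_span_row, hU, Fintype.card_fin]
  ext i j
  have hrow : ∑ c, N i c • U c = 0 := by
    ext c
    have := congrFun (congrFun hN i) c
    simpa [Matrix.mul_apply, Finset.sum_apply] using this
  exact Fintype.linearIndependent_iff.mp hli (N i) hrow j

open scoped MatrixOrder in
lemma aux_decomp {m n : ℕ} (A : Matrix (Fin m) (Fin n) ℝ)
    (U : Matrix (Fin (n - m)) (Fin n) ℝ)
    (hA : A.rank = m) (hU : U.rank = n - m) (hAU : A * Uᵀ = 0)
    (Y : Matrix (Fin n) (Fin n) ℝ) (hY : Y.PosSemidef) (hAY : A * Y = 0) :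
    ∃ W : Matrix (Fin n) (Fin (n - m)) ℝ, Y = Uᵀ * (Wᵀ * W) * U := by
  classical
  set R := CFC.sqrt Y with hRdef
  have hRR : R * R = Y := CFC.sqrt_mul_sqrt_self Y hY.nonneg
  have hRs : Rᵀ = R := by
    have := (CFC.sqrt_nonneg Y).posSemidef.isHermitian.eq
    simpa [conjTranspose_eq_transpose_of_trivial] using this
  have hAR : A * R = 0 := by
    have h1 : (A * R) * (A * R)ᵀ = 0 := by
      have : (A * R) * (A * R)ᵀ = (A * Y) * Aᵀ := by
        rw [transpose_mul, hRs, ← hRR]; simp only [Matrix.mul_assoc]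
      rw [this, hAY]; simp
    have h2 : ((A * R)ᵀ)ᴴ * (A * R)ᵀ = 0 := by
      rw [conjTranspose_eq_transpose_of_trivial, transpose_transpose]; exact h1
    have := conjTranspose_mul_self_eq_zero.mp h2
    simpa using congrArg transpose this
  have hrowker : ∀ i, R i ∈ LinearMap.ker A.mulVecLin := by
    intro i
    rw [LinearMap.mem_ker]
    ext j
    have : (R * Aᵀ) i j = 0 := by
      have : R * Aᵀ = 0 := by
        have := congrArg transpose hAR
        simpa [transpose_mul, hRs] using this
      rw [this]; rfl
    simpa [Matrix.mul_apply, mulVecLin_apply, mulVec, dotProduct, mul_comm] using this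
  have hmn : m ≤ n := by
    have := A.rank_le_card_width
    simp only [Fintype.card_fin] at this
    omega
  have hkerrank : Module.finrank ℝ (LinearMap.ker A.mulVecLin) = n - m := by
    have h1 := LinearMap.finrank_range_add_finrank_ker A.mulVecLin
    have h2 : Module.finrank ℝ (LinearMap.range A.mulVecLin) = m := hA
    rw [h2, Module.finrank_fintype_fun_eq_card, Fintype.card_fin] at h1
    omega
  have hspanle : Submodule.span ℝ (Set.range U) ≤ LinearMap.ker A.mulVecLin := by
    rw [Submodule.span_le]
    rintro x ⟨i, rfl⟩
    rw [SetLike.mem_coe, LinearMap.mem_ker]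
    ext j
    have := congrFun (congrFun hAU j) i
    simpa [Matrix.mul_apply, mulVecLin_apply, mulVec, dotProduct] using this
  have hspanrank : Module.finrank ℝ (Submodule.span ℝ (Set.range U)) = n - m := by
    exact (rank_eq_finrank_span_row U).symm.trans hU
  have hspan : Submodule.span ℝ (Set.range U) = LinearMap.ker A.mulVecLin :=
    Submodule.eq_of_le_of_finrank_eq hspanle (by rw [hspanrank, hkerrank])
  have hmem : ∀ i, ∃ c : Fin (n - m) → ℝ, ∑ s, c s • U s = R i := by
    intro i
    have : R i ∈ Submodule.span ℝ (Set.range U) := hspan ▸ hrowker i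
    exact (Submodule.mem_span_range_iff_exists_fun ℝ).mp this
  choose W hW using hmem
  refine ⟨Matrix.of W, ?_⟩
  have hWU : Matrix.of W * U = R := by
    ext i j
    have := congrFun (hW i) j
    simpa [Matrix.mul_apply, Finset.sum_apply] using this
  calc Y = R * R := hRR.symm
    _ = Rᵀ * R := by rw [hRs]
    _ = (Matrix.of W * U)ᵀ * (Matrix.of W * U) := by rw [hWU]
    _ = Uᵀ * ((Matrix.of W)ᵀ * Matrix.of W) * U := by
        rw [transpose_mul]; simp only [Matrix.mul_assoc]

lemma aux_trace_S_vecMulVec {q : ℕ} (S : Matrix (Fin q) (Fin q) ℝ) (w : Fin q → ℝ) :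
    (S * vecMulVec w w).trace = dotProduct w (S *ᵥ w) := by
  simp only [trace, Matrix.diag, Matrix.mul_apply, vecMulVec_apply, dotProduct, mulVec,
    Finset.mul_sum]
  congr 1; ext i; congr 1; ext j; ring

theorem stmt_9 {m n : ℕ} (A : Matrix (Fin m) (Fin n) ℝ)
    (U : Matrix (Fin (n - m)) (Fin n) ℝ)
    (hA : A.rank = m) (hU : U.rank = n - m) (hAU : A * Uᵀ = 0)
    (Θ : Matrix (Fin (n - m)) (Fin (n - m)) ℝ) (hΘ : Θ.PosSemidef)
    (Xs : Matrix (Fin n) (Fin n) ℝ) (hXs : Xs = Uᵀ * Θ * U) :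
    {S : Matrix (Fin n) (Fin n) ℝ | S.IsSymm ∧
        ∀ Y : Matrix (Fin n) (Fin n) ℝ, Y.PosSemidef → A * Y = 0 →
          Matrix.trace (Sᵀ * (Y - Xs)) ≤ 0}
      = {S : Matrix (Fin n) (Fin n) ℝ | S.IsSymm ∧
          (-(U * S * Uᵀ)).PosSemidef ∧ U * S * Xs = 0} := by
  have hXsPSD : Xs.PosSemidef := by
    rw [hXs]
    have := hΘ.mul_mul_conjTranspose_same Uᵀ
    simpa [conjTranspose_eq_transpose_of_trivial] using this
  have hAXs : A * Xs = 0 := by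
    rw [hXs, ← Matrix.mul_assoc, ← Matrix.mul_assoc, hAU]; simp
  -- key trace identity: trace (S * Xs) = trace (U * S * Uᵀ * Θ)
  have keytr : ∀ S : Matrix (Fin n) (Fin n) ℝ,
      (S * Xs).trace = (U * S * Uᵀ * Θ).trace := by
    intro S
    rw [hXs]
    calc (S * (Uᵀ * Θ * U)).trace = ((S * Uᵀ * Θ) * U).trace := by
          simp only [Matrix.mul_assoc]
      _ = (U * (S * Uᵀ * Θ)).trace := by rw [trace_mul_comm]
      _ = (U * S * Uᵀ * Θ).trace := by simp only [Matrix.mul_assoc]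
  ext S
  simp only [Set.mem_setOf_eq]
  constructor
  · rintro ⟨hS, h⟩
    have hSsymm : Sᵀ = S := hS
    have hherm : (-(U * S * Uᵀ)).IsHermitian := by
      have ht : (U * S * Uᵀ)ᵀ = U * S * Uᵀ := by
        rw [transpose_mul, transpose_mul, transpose_transpose, hSsymm]
        simp only [Matrix.mul_assoc]
      rw [IsHermitian, conjTranspose_eq_transpose_of_trivial, transpose_neg, ht]
    have hpsd : (-(U * S * Uᵀ)).PosSemidef := by
      refine PosSemidef.of_dotProduct_mulVec_nonneg hherm fun v => ?_
      set w := Uᵀ *ᵥ v with hw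
      have hwv : w = vecMul v U := by rw [hw, mulVec_transpose]
      set Y := Xs + vecMulVec w w with hYdef
      have hYpsd : Y.PosSemidef := aux_psd_add hXsPSD (aux_vecMulVec_psd w)
      have hAw : A *ᵥ w = 0 := by
        rw [hw, mulVec_mulVec, hAU, zero_mulVec]
      have hAY : A * Y = 0 := by
        rw [hYdef, Matrix.mul_add, hAXs, zero_add]
        ext i j
        have : (A * vecMulVec w w) i j = (A *ᵥ w) i * w j := by
          simp [Matrix.mul_apply, vecMulVec_apply, mulVec, dotProduct, Finset.sum_mul,
            mul_assoc]
        rw [this, hAw]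
        simp
      have htr := h Y hYpsd hAY
      have hYX : Y - Xs = vecMulVec w w := by rw [hYdef]; exact add_sub_cancel_left Xs _
      rw [hYX, hSsymm, aux_trace_S_vecMulVec] at htr
      have : dotProduct (star v) ((-(U * S * Uᵀ)) *ᵥ v) = -(dotProduct w (S *ᵥ w)) := by
        rw [neg_mulVec, dotProduct_neg, star_trivial]
        congr 1
        rw [Matrix.mul_assoc, ← Matrix.mulVec_mulVec, dotProduct_mulVec, ← hwv,
          ← Matrix.mulVec_mulVec, ← hw]
      rw [this]
      linarith
    refine ⟨hS, hpsd, ?_⟩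
    -- trace (S * Xs) = 0
    have h1 : (Sᵀ * (Xs + Xs - Xs)).trace ≤ 0 := by
      refine h (Xs + Xs) (aux_psd_add hXsPSD hXsPSD) ?_
      rw [Matrix.mul_add, hAXs, zero_add]
    have h2 : (Sᵀ * ((0 : Matrix (Fin n) (Fin n) ℝ) - Xs)).trace ≤ 0 := by
      refine h 0 PosSemidef.zero (by simp)
    have e1 : Xs + Xs - Xs = Xs := add_sub_cancel_right Xs Xs
    rw [e1] at h1
    have e2 : (0 : Matrix (Fin n) (Fin n) ℝ) - Xs = -Xs := zero_sub Xs
    rw [e2, Matrix.mul_neg, trace_neg] at h2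
    have htr0 : (Sᵀ * Xs).trace = 0 := le_antisymm h1 (by linarith)
    rw [hSsymm, keytr] at htr0
    have hneg : ((-(U * S * Uᵀ)) * Θ).trace = 0 := by
      rw [neg_mul, trace_neg, htr0, neg_zero]
    have hzero := aux_trace_mul_eq_zero hpsd hΘ hneg
    have hUSUΘ : U * S * Uᵀ * Θ = 0 := by
      have := congrArg Neg.neg hzero
      simpa [neg_mul] using this
    rw [hXs, ← Matrix.mul_assoc, ← Matrix.mul_assoc, hUSUΘ, Matrix.zero_mul]
  · rintro ⟨hS, hpsd, hz⟩
    have hSsymm : Sᵀ = S := hS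
    refine ⟨hS, fun Y hY hAY => ?_⟩
    obtain ⟨W, hYW⟩ := aux_decomp A U hA hU hAU Y hY hAY
    -- trace (S * Xs) = 0
    have hN : (U * S * Uᵀ * Θ) * U = 0 := by
      have : U * S * Xs = (U * S * Uᵀ * Θ) * U := by
        rw [hXs]; simp only [Matrix.mul_assoc]
      rw [← this, hz]
    have hN0 : U * S * Uᵀ * Θ = 0 := aux_cancel U hU _ hN
    have htrXs : (S * Xs).trace = 0 := by rw [keytr, hN0, trace_zero]
    -- trace (S * Y) ≤ 0
    have htrY : (S * Y).trace ≤ 0 := by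
      have hΨ : (Wᵀ * W).PosSemidef := by
        have := posSemidef_conjTranspose_mul_self W
        simpa [conjTranspose_eq_transpose_of_trivial] using this
      have e : (S * Y).trace = -(((-(U * S * Uᵀ)) * (Wᵀ * W)).trace) := by
        rw [hYW, neg_mul, trace_neg, neg_neg]
        calc (S * (Uᵀ * (Wᵀ * W) * U)).trace = ((S * Uᵀ * (Wᵀ * W)) * U).trace := by
              simp only [Matrix.mul_assoc]
          _ = (U * (S * Uᵀ * (Wᵀ * W))).trace := by rw [trace_mul_comm]
          _ = (U * S * Uᵀ * (Wᵀ * W)).trace := by simp only [Matrix.mul_assoc]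
      rw [e]
      have := aux_trace_mul_nonneg hpsd hΨ
      linarith
    have : Sᵀ * (Y - Xs) = S * Y - S * Xs := by rw [hSsymm, Matrix.mul_sub]
    rw [this, trace_sub, htrXs]
    linarith
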